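/- arXiv:2008.13224 — 3 statements merged into one kernel-verified Lean document; each statement's English description precedes it below -/
import Mathlib

section
/- Fix b ≥ 1 and g = 4b². Let G be a gadget of type I or of type II (basic or extended), with designated vertices p, q. Then: (1) G contains a (2,b)-alternating-path R_0 with s_1(R_0) = t_1(R_0) = p and t_2(R_0) = q; (2) from every vertex of G there is a directed path in G ending in {p,q}. -/
/- Common definitions: digraphs as irreflexive-in-intent relations `V → V → Prop`,
   directed paths as nonempty duplicate-free lists of vertices,
   subdivisions, gadgets, alternating paths and chains, following
   "Subdivisions in digraphs of large out-degree or large dichromatic number". -/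

namespace Paper

variable {V : Type*}

/-- `p` is a directed path in the digraph `D`: a nonempty list of pairwise distinct
vertices in which consecutive vertices are joined by an arc of `D`.
Its length (number of arcs) is `p.length - 1`. -/
def IsDipathList (D : V → V → Prop) (p : List V) : Prop :=
  p ≠ [] ∧ p.Nodup ∧ p.Chain' D

/-- The out-degree of a vertex. -/
noncomputable def outDeg (D : V → V → Prop) (v : V) : ℕ :=
  Set.ncard {w | D v w}

/-- The digraph `D` contains a subdivision of the digraph `F`: there is an injective
embedding `φ` of the branch vertices and, for every arc `(x,y)` of `F`, a directed path
in `D` from `φ x` to `φ y` of length at least one, such that the internal vertices of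
these paths avoid the branch vertices and the paths of distinct arcs are internally
vertex-disjoint. -/
def ContainsSubdivisionOf {W : Type*} (D : V → V → Prop) (F : W → W → Prop) : Prop :=
  ∃ (φ : W → V) (P : W → W → List V),
    Function.Injective φ ∧
    (∀ ⦃x y⦄, F x y → IsDipathList D (P x y) ∧ (P x y).head? = some (φ x) ∧
      (P x y).getLast? = some (φ y) ∧ 2 ≤ (P x y).length ∧
      ∀ z ∈ (P x y).tail.dropLast, ∀ w, φ w ≠ z) ∧
    (∀ ⦃x y x' y'⦄, F x y → F x' y' → (x, y) ≠ (x', y') →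
      ∀ z ∈ (P x y).tail.dropLast, z ∉ P x' y')

/-- As `ContainsSubdivisionOf`, but moreover the subdivision spans exactly
the vertex set `S`. -/
def SpansSubdivisionOf {W : Type*} (D : V → V → Prop) (S : Set V) (F : W → W → Prop) : Prop :=
  ∃ (φ : W → V) (P : W → W → List V),
    Function.Injective φ ∧
    (∀ ⦃x y⦄, F x y → IsDipathList D (P x y) ∧ (P x y).head? = some (φ x) ∧
      (P x y).getLast? = some (φ y) ∧ 2 ≤ (P x y).length ∧
      ∀ z ∈ (P x y).tail.dropLast, ∀ w, φ w ≠ z) ∧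
    (∀ ⦃x y x' y'⦄, F x y → F x' y' → (x, y) ≠ (x', y') →
      ∀ z ∈ (P x y).tail.dropLast, z ∉ P x' y') ∧
    S = Set.range φ ∪ {z | ∃ x y, F x y ∧ z ∈ P x y}

/-- The biorientation of the triangle minus one arc: vertices `0,1,2` and arcs
`(0,1),(1,0),(1,2),(2,1),(0,2)`. -/
def K3e : Fin 3 → Fin 3 → Prop := fun x y =>
  (x, y) = (0, 1) ∨ (x, y) = (1, 0) ∨ (x, y) = (1, 2) ∨ (x, y) = (2, 1) ∨ (x, y) = (0, 2)

/-- The biorientation of the complete graph on four vertices. -/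
def K4bi : Fin 4 → Fin 4 → Prop := fun x y => x ≠ y

/-- The biorientation of the star with four edges (center `0`). -/
def S4bi : Fin 5 → Fin 5 → Prop := fun x y => x ≠ y ∧ (x = 0 ∨ y = 0)

/-- The orientation of the cycle of length `ℓ` (vertex set `ZMod ℓ`) determined by
`σ`: the edge `{x, x+1}` is oriented from `x` to `x+1` if `σ x = true`, and from
`x+1` to `x` otherwise. -/
def CycleOrientation (ℓ : ℕ) (σ : ZMod ℓ → Bool) : ZMod ℓ → ZMod ℓ → Prop :=
  fun x y => (σ x = true ∧ y = x + 1) ∨ (σ y = false ∧ x = y + 1)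

/-- The oriented cycle `C_{a,b}` on `2ab` vertices: going around the cycle
`ZMod (2ab)`, the arcs of the `j`-th block of `b` consecutive edges are oriented
forwards for even `j` and backwards for odd `j`; its sources are `s_j = 2bj`
and its sinks are `t_j = 2bj + b`, joined by `2a` internally disjoint directed
paths of length `b` each. -/
def Cab (a b : ℕ) : ZMod (2 * a * b) → ZMod (2 * a * b) → Prop := fun x y =>
  ∃ i : ℕ, i < 2 * a * b ∧
    (((i / b) % 2 = 0 ∧ x = (i : ZMod (2 * a * b)) ∧ y = ((i + 1 : ℕ) : ZMod (2 * a * b))) ∨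
     ((i / b) % 2 = 1 ∧ x = ((i + 1 : ℕ) : ZMod (2 * a * b)) ∧ y = (i : ZMod (2 * a * b))))

/-- The directed girth of `D` is at least `g`: every directed cycle
(a nonempty duplicate-free list `v :: p` with consecutive arcs and an arc from the
last vertex back to `v`) has length at least `g`. -/
def DirGirthGE (D : V → V → Prop) (g : ℕ) : Prop :=
  ∀ (v : V) (p : List V), (v :: p).Nodup → List.Chain D v (p ++ [v]) → g ≤ p.length + 1

/-- `D` is strongly connected. -/
def StronglyConnected (D : V → V → Prop) : Prop :=
  ∀ u v : V, Relation.ReflTransGen D u v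

/-- `D` is strongly `k`-arc-connected: after deleting any set of at most `k-1` arcs,
the digraph remains strongly connected. -/
def StronglyArcConnected (D : V → V → Prop) (k : ℕ) : Prop :=
  ∀ E : Finset (V × V), E.card < k →
    StronglyConnected (fun u v => D u v ∧ (u, v) ∉ E)

/-- `x` and `y` are consecutive (in this order) in the list `l`. -/
def adjIn (l : List V) (x y : V) : Prop := ∃ l₁ l₂, l = l₁ ++ x :: y :: l₂

/-- A type-I gadget in `D`: a directed cycle `p, q, rest…` of length at least `g`
through the arc `(p,q)`. -/
structure TypeIGadget (D : V → V → Prop) (g : ℕ) where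
  p : V
  q : V
  rest : List V
  nodup : (p :: q :: rest).Nodup
  chain : List.Chain D p (q :: (rest ++ [p]))
  glen : g ≤ rest.length + 2

def TypeIGadget.verts {D : V → V → Prop} {g : ℕ} (G : TypeIGadget D g) : Set V :=
  {x | x ∈ G.p :: G.q :: G.rest}

def TypeIGadget.arcs {D : V → V → Prop} {g : ℕ} (G : TypeIGadget D g) : V → V → Prop :=
  adjIn (G.p :: G.q :: (G.rest ++ [G.p]))

/-- A basic type-II gadget in `D` (with girth parameter `b`): vertices `p, q, r` and a
directed path `P₁` from `r` to `p` of length at least `2b² + b - 2` avoiding `q`,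
all of whose vertices send an arc to `q`. -/
structure BasicIIGadget (D : V → V → Prop) (b : ℕ) where
  p : V
  q : V
  r : V
  P₁ : List V
  path₁ : IsDipathList D P₁
  first₁ : P₁.head? = some r
  last₁ : P₁.getLast? = some p
  len₁ : 2 * b ^ 2 + b - 1 ≤ P₁.length
  hq : q ∉ P₁
  toq : ∀ x ∈ P₁, D x q

def BasicIIGadget.verts {D : V → V → Prop} {b : ℕ} (G : BasicIIGadget D b) : Set V :=
  insert G.q {x | x ∈ G.P₁}

def BasicIIGadget.arcs {D : V → V → Prop} {b : ℕ} (G : BasicIIGadget D b) :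
    V → V → Prop :=
  fun x y => adjIn G.P₁ x y ∨ (x ∈ G.P₁ ∧ y = G.q)

/-- An extended type-II gadget: a basic type-II gadget together with a directed path
`P₂` of length at least `b` ending at `r`, meeting `P₁` only in `r` and avoiding `q`,
such that either the first vertex of `P₂` sends an arc to the second vertex of `P₁`,
or some vertex of `P₁` other than `r` sends an arc to the first vertex of `P₂`. -/
structure ExtIIGadget (D : V → V → Prop) (b : ℕ) where
  p : V
  q : V
  r : V
  P₁ : List V
  path₁ : IsDipathList D P₁
  first₁ : P₁.head? = some r
  last₁ : P₁.getLast? = some p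
  len₁ : 2 * b ^ 2 + b - 1 ≤ P₁.length
  hq : q ∉ P₁
  toq : ∀ x ∈ P₁, D x q
  P₂ : List V
  path₂ : IsDipathList D P₂
  last₂ : P₂.getLast? = some r
  len₂ : b + 1 ≤ P₂.length
  inter : ∀ x ∈ P₁, x ∈ P₂ → x = r
  hq₂ : q ∉ P₂
  extra : (∃ z y, P₂.head? = some z ∧ P₁[1]? = some y ∧ D z y) ∨
          (∃ w z, w ∈ P₁ ∧ w ≠ r ∧ P₂.head? = some z ∧ D w z)

def ExtIIGadget.verts {D : V → V → Prop} {b : ℕ} (G : ExtIIGadget D b) : Set V :=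
  insert G.q ({x | x ∈ G.P₁} ∪ {x | x ∈ G.P₂})

def ExtIIGadget.arcs {D : V → V → Prop} {b : ℕ} (G : ExtIIGadget D b) : V → V → Prop :=
  fun x y => adjIn G.P₁ x y ∨ (x ∈ G.P₁ ∧ y = G.q) ∨ adjIn G.P₂ x y ∨
    (D x y ∧ ((G.P₂.head? = some x ∧ G.P₁[1]? = some y) ∨
              (x ∈ G.P₁ ∧ x ≠ G.r ∧ G.P₂.head? = some y)))

/-- A type-III gadget: vertices `p, q, r`, the arc `(p,q)`, and two internally
vertex-disjoint directed paths `P₁ : p → r` and `P₂ : q → r`, each of length at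
least `2b - 1`. -/
structure TypeIIIGadget (D : V → V → Prop) (b : ℕ) where
  p : V
  q : V
  r : V
  arc : D p q
  P₁ : List V
  P₂ : List V
  path₁ : IsDipathList D P₁
  path₂ : IsDipathList D P₂
  first₁ : P₁.head? = some p
  first₂ : P₂.head? = some q
  last₁ : P₁.getLast? = some r
  last₂ : P₂.getLast? = some r
  len₁ : 2 * b ≤ P₁.length
  len₂ : 2 * b ≤ P₂.length
  inter : ∀ x ∈ P₁, x ∈ P₂ → x = r

def TypeIIIGadget.verts {D : V → V → Prop} {b : ℕ} (G : TypeIIIGadget D b) : Set V :=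
  {x | x ∈ G.P₁} ∪ {x | x ∈ G.P₂}

def TypeIIIGadget.arcs {D : V → V → Prop} {b : ℕ} (G : TypeIIIGadget D b) :
    V → V → Prop :=
  fun x y => (x = G.p ∧ y = G.q) ∨ adjIn G.P₁ x y ∨ adjIn G.P₂ x y

/-- A trivial gadget: just the arc `(p,q)`. -/
structure TrivGadget (D : V → V → Prop) where
  p : V
  q : V
  arc : D p q

def TrivGadget.verts {D : V → V → Prop} (G : TrivGadget D) : Set V := {G.p, G.q}

def TrivGadget.arcs {D : V → V → Prop} (G : TrivGadget D) : V → V → Prop :=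
  fun x y => x = G.p ∧ y = G.q

/-- An `(a,b)`-alternating path in `D` (with 0-based indexing): vertices
`s 0, …, s (a-1)`, `t 0, …, t (a-1)` and pairwise internally disjoint directed paths
`Q i : s i → t i` and `Q' i : s (i+1) → t i`, forming an oriented path; every `Q' i`
and every `Q i` with `0 < i < a - 1` has length at least `b` (`Q 0` and `Q (a-1)`
may even be single vertices). -/
structure AltPath (D : V → V → Prop) (a b : ℕ) where
  s : Fin a → V
  t : Fin a → V
  Q : Fin a → List V
  Q' : Fin (a - 1) → List V
  path_Q : ∀ i, IsDipathList D (Q i)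
  first_Q : ∀ i, (Q i).head? = some (s i)
  last_Q : ∀ i, (Q i).getLast? = some (t i)
  path_Q' : ∀ i, IsDipathList D (Q' i)
  first_Q' : ∀ i : Fin (a - 1),
    (Q' i).head? = some (s ⟨i.val + 1, by have := i.isLt; omega⟩)
  last_Q' : ∀ i : Fin (a - 1),
    (Q' i).getLast? = some (t ⟨i.val, by have := i.isLt; omega⟩)
  len_Q : ∀ i : Fin a, 0 < i.val → i.val < a - 1 → b + 1 ≤ (Q i).length
  len_Q' : ∀ i, b + 1 ≤ (Q' i).length
  disj_QQ : ∀ i j : Fin a, i ≠ j → ∀ x ∈ Q i, x ∉ Q j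
  disj_Q'Q' : ∀ i j : Fin (a - 1), i ≠ j → ∀ x ∈ Q' i, x ∉ Q' j
  disj_QQ' : ∀ (i : Fin a) (j : Fin (a - 1)), ∀ x ∈ Q i, x ∈ Q' j →
    (j.val = i.val ∧ x = t i) ∨ (i.val = j.val + 1 ∧ x = s i)

def AltPath.verts {D : V → V → Prop} {a b : ℕ} (R : AltPath D a b) : Set V :=
  {x | (∃ i, x ∈ R.Q i) ∨ (∃ i, x ∈ R.Q' i)}

/-- A strong alternating path: additionally `Q 0` and `Q (a-1)` (hence all `Q i`)
have length at least `b`. -/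
def AltPath.Strong {D : V → V → Prop} {a b : ℕ} (R : AltPath D a b) : Prop :=
  ∀ i, b + 1 ≤ (R.Q i).length

def AltPath.arcs {D : V → V → Prop} {a b : ℕ} (R : AltPath D a b) : V → V → Prop :=
  fun x y => (∃ i, adjIn (R.Q i) x y) ∨ (∃ i, adjIn (R.Q' i) x y)

/-- A gadget allowed in a chain: type I (with `g = 4b²`), basic type II, or type III. -/
inductive ChainGadget (D : V → V → Prop) (b : ℕ) where
  | I : TypeIGadget D (4 * b ^ 2) → ChainGadget D b
  | II : BasicIIGadget D b → ChainGadget D b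
  | III : TypeIIIGadget D b → ChainGadget D b

def ChainGadget.pp {D : V → V → Prop} {b : ℕ} : ChainGadget D b → V
  | .I G => G.p
  | .II G => G.p
  | .III G => G.p

def ChainGadget.qq {D : V → V → Prop} {b : ℕ} : ChainGadget D b → V
  | .I G => G.q
  | .II G => G.q
  | .III G => G.q

def ChainGadget.verts {D : V → V → Prop} {b : ℕ} : ChainGadget D b → Set V
  | .I G => G.verts
  | .II G => G.verts
  | .III G => G.verts

def ChainGadget.arcs {D : V → V → Prop} {b : ℕ} : ChainGadget D b → V → V → Prop
  | .I G => G.arcs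
  | .II G => G.arcs
  | .III G => G.arcs

/-- A chain in `D`: a directed path (spine) `v 0, …, v m`, a set `A2` of spine arcs,
and a gadget for every arc in `A2` (arcs outside `A2` form `A1` and carry trivial
gadgets), such that each gadget has the endpoints of its arc as designated vertices,
meets the spine only in these two vertices, and two distinct gadgets meet only in
spine vertices. -/
structure GChain (D : V → V → Prop) (b m : ℕ) where
  v : Fin (m + 1) → V
  inj : Function.Injective v
  spine : ∀ i : Fin m, D (v i.castSucc) (v i.succ)
  A2 : Finset (Fin m)
  gad : (i : Fin m) → i ∈ A2 → ChainGadget D b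
  hp : ∀ (i : Fin m) (hi : i ∈ A2), (gad i hi).pp = v i.castSucc
  hq : ∀ (i : Fin m) (hi : i ∈ A2), (gad i hi).qq = v i.succ
  hspine : ∀ (i : Fin m) (hi : i ∈ A2) (j : Fin (m + 1)),
    v j ∈ (gad i hi).verts → j = i.castSucc ∨ j = i.succ
  hdisj : ∀ (i : Fin m) (hi : i ∈ A2) (j : Fin m) (hj : j ∈ A2), i ≠ j →
    ∀ x, x ∈ (gad i hi).verts → x ∈ (gad j hj).verts → ∃ k, x = v k

def GChain.verts {D : V → V → Prop} {b m : ℕ} (C : GChain D b m) : Set V :=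
  Set.range C.v ∪ {x | ∃ (i : Fin m) (hi : i ∈ C.A2), x ∈ (C.gad i hi).verts}

def GChain.arcs {D : V → V → Prop} {b m : ℕ} (C : GChain D b m) : V → V → Prop :=
  fun x y => (∃ i : Fin m, x = C.v i.castSucc ∧ y = C.v i.succ) ∨
    (∃ (i : Fin m) (hi : i ∈ C.A2), (C.gad i hi).arcs x y)

/-- The vertex set of the gadget `G_e` sitting on the `i`-th spine arc
(the trivial gadget for arcs of `A1`). -/
def GChain.gadVerts {D : V → V → Prop} {b m : ℕ} (C : GChain D b m) (i : Fin m) :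
    Set V :=
  if h : i ∈ C.A2 then (C.gad i h).verts else {C.v i.castSucc, C.v i.succ}

/-- An arbitrary gadget: trivial, type I (with `g = 4b²`), basic or extended type II,
or type III. -/
inductive GadgetAny (D : V → V → Prop) (b : ℕ) where
  | triv : TrivGadget D → GadgetAny D b
  | I : TypeIGadget D (4 * b ^ 2) → GadgetAny D b
  | II : BasicIIGadget D b → GadgetAny D b
  | IIext : ExtIIGadget D b → GadgetAny D b
  | III : TypeIIIGadget D b → GadgetAny D b

def GadgetAny.pp {D : V → V → Prop} {b : ℕ} : GadgetAny D b → V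
  | .triv G => G.p
  | .I G => G.p
  | .II G => G.p
  | .IIext G => G.p
  | .III G => G.p

def GadgetAny.qq {D : V → V → Prop} {b : ℕ} : GadgetAny D b → V
  | .triv G => G.q
  | .I G => G.q
  | .II G => G.q
  | .IIext G => G.q
  | .III G => G.q

def GadgetAny.verts {D : V → V → Prop} {b : ℕ} : GadgetAny D b → Set V
  | .triv G => G.verts
  | .I G => G.verts
  | .II G => G.verts
  | .IIext G => G.verts
  | .III G => G.verts

def GadgetAny.arcs {D : V → V → Prop} {b : ℕ} : GadgetAny D b → V → V → Prop
  | .triv G => G.arcs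
  | .I G => G.arcs
  | .II G => G.arcs
  | .IIext G => G.arcs
  | .III G => G.arcs

end Paper

namespace Paper

section Helpers
variable {V : Type*}

lemma adjIn_infix {l l' : List V} (h : l' <:+: l) {x y : V} (hxy : adjIn l' x y) :
    adjIn l x y := by
  obtain ⟨s, t, rfl⟩ := h
  obtain ⟨l₁, l₂, rfl⟩ := hxy
  exact ⟨s ++ l₁, l₂ ++ t, by simp⟩

lemma chain'_adjIn_self (l : List V) : l.Chain' (adjIn l) := by
  induction l with
  | nil => exact List.isChain_nil
  | cons a t ih =>
    cases t with
    | nil => exact List.isChain_singleton _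
    | cons b u =>
      refine List.isChain_cons_cons.2 ⟨⟨[], u, rfl⟩, ?_⟩
      exact ih.imp fun x y hxy => adjIn_infix ⟨[a], [], by simp⟩ hxy

lemma isDipath_of_infix {A : V → V → Prop} {l l' : List V}
    (hA : ∀ x y, adjIn l x y → A x y) (h : l' <:+: l) (hne : l' ≠ []) (hnd : l'.Nodup) :
    IsDipathList A l' :=
  ⟨hne, hnd, (chain'_adjIn_self l').imp fun x y hxy => hA x y (adjIn_infix h hxy)⟩

lemma head_ne_getLast {l : List V} (hnd : l.Nodup) (h2 : 2 ≤ l.length) {a c : V}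
    (ha : l.head? = some a) (hc : l.getLast? = some c) : a ≠ c := by
  match l, h2 with
  | a :: y :: u, _ =>
    simp only [List.head?_cons, Option.some.injEq] at ha
    subst ha
    have hc' : c ∈ y :: u := by
      have : (a :: y :: u).getLast? = (y :: u).getLast? := rfl
      rw [this] at hc
      exact List.mem_of_mem_getLast? (by simp [hc])
    intro h; subst h
    exact (List.nodup_cons.1 hnd).1 hc'

lemma altpath_two {A : V → V → Prop} {b : ℕ} {S Q1 : List V} {p q s1 : V}
    (hS : IsDipathList A S) (hSh : S.head? = some s1) (hSl : S.getLast? = some p)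
    (hlenS : b + 1 ≤ S.length)
    (hQ1 : IsDipathList A Q1) (hQ1h : Q1.head? = some s1) (hQ1l : Q1.getLast? = some q)
    (hpQ1 : p ∉ Q1)
    (hinter : ∀ x ∈ Q1, x ∈ S → x = s1) :
    ∃ R : AltPath A 2 b, R.s 0 = p ∧ R.t 0 = p ∧ R.t 1 = q := by
  refine ⟨⟨![p, s1], ![p, q], ![[p], Q1], ![S], ?_, ?_, ?_, ?_, ?_, ?_, ?_, ?_, ?_, ?_, ?_⟩,
    ?_, ?_, ?_⟩
  · intro i; fin_cases i
    · exact ⟨by simp, by simp, List.isChain_singleton _⟩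
    · exact hQ1
  · intro i; fin_cases i <;> simp [hQ1h]
  · intro i; fin_cases i <;> simp [hQ1l]
  · intro i; fin_cases i; exact hS
  · intro i; fin_cases i; simpa using hSh
  · intro i; fin_cases i; simpa using hSl
  · intro i h1 h2; omega
  · intro i; fin_cases i; simpa using hlenS
  · intro i j hij x hx
    fin_cases i <;> fin_cases j
    · exact absurd rfl hij
    · simp only [Fin.mk_zero, Matrix.cons_val_zero, List.mem_singleton] at hx
      subst hx
      intro h
      exact hpQ1 (by simpa using h)
    · simp only [Fin.mk_one, Matrix.cons_val_one, Matrix.head_cons] at hx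
      simp only [Fin.mk_zero, Matrix.cons_val_zero, List.mem_singleton]
      rintro rfl; exact hpQ1 hx
    · exact absurd rfl hij
  · intro i j hij
    exact absurd (Fin.ext (by omega)) hij
  · intro i j x hx hx'
    fin_cases i <;> fin_cases j
    · left
      simp only [Fin.mk_zero, Matrix.cons_val_zero, List.mem_singleton] at hx
      exact ⟨rfl, by simpa using hx⟩
    · right
      simp only [Fin.mk_one, Matrix.cons_val_one, Matrix.head_cons] at hx
      simp only [Fin.mk_zero, Matrix.cons_val_zero] at hx'
      exact ⟨rfl, by simpa using hinter x hx hx'⟩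
  · simp
  · simp
  · simp

lemma altpath_of_toq {A : V → V → Prop} {P₁ : List V} {p q : V} {b : ℕ} (hb : 1 ≤ b)
    (hnd : P₁.Nodup) (hlast : P₁.getLast? = some p) (hlen : b + 1 ≤ P₁.length)
    (hq : q ∉ P₁) (harc : ∀ x y, adjIn P₁ x y → A x y) (htoq : ∀ x ∈ P₁, A x q) :
    ∃ R : AltPath A 2 b, R.s 0 = p ∧ R.t 0 = p ∧ R.t 1 = q := by
  set S := P₁.drop (P₁.length - (b + 1)) with hSdef
  have hSlen : S.length = b + 1 := by
    rw [hSdef, List.length_drop]; omega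
  have hSne : S ≠ [] := by intro h; rw [h] at hSlen; simp at hSlen
  have hsuf : S <:+ P₁ := List.drop_suffix _ _
  have hSnd : S.Nodup := hsuf.sublist.nodup hnd
  obtain ⟨s1, hs1⟩ : ∃ s1, S.head? = some s1 := ⟨S.head hSne, List.head?_eq_head hSne⟩
  have hSl : S.getLast? = some p := by
    obtain ⟨t, ht⟩ := hsuf
    rw [← hlast, ← ht, List.getLast?_append_of_ne_nil _ hSne]
  have hs1S : s1 ∈ S := List.mem_of_mem_head? (by simp [hs1])
  have hs1P : s1 ∈ P₁ := hsuf.subset hs1S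
  have hpP : p ∈ P₁ := List.mem_of_mem_getLast? (by simp [hlast])
  have hpq : p ≠ q := fun h => hq (h ▸ hpP)
  have hps1 : p ≠ s1 := (head_ne_getLast hSnd (by omega) hs1 hSl).symm
  have hs1q : s1 ≠ q := fun h => hq (h ▸ hs1P)
  refine altpath_two (Q1 := [s1, q]) (isDipath_of_infix harc hsuf.isInfix hSne hSnd)
    hs1 hSl (by omega) ⟨by simp, by simp [hs1q], List.isChain_pair.2 (htoq s1 hs1P)⟩ rfl rfl
    (by simp [hps1, hpq]) ?_
  intro x hx hxS
  rcases List.mem_pair.1 hx with rfl | rfl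
  · rfl
  · exact absurd (hsuf.subset hxS) hq

lemma exists_dipath_to_last {A : V → V → Prop} {l : List V}
    (hA : ∀ x y, adjIn l x y → A x y) (hnd : l.Nodup) {p x : V}
    (hl : l.getLast? = some p) (hx : x ∈ l) :
    ∃ P, IsDipathList A P ∧ P.head? = some x ∧ P.getLast? = some p := by
  obtain ⟨s, t, rfl⟩ := List.append_of_mem hx
  refine ⟨x :: t, isDipath_of_infix hA ⟨s, [], by simp⟩ (by simp)
    (((List.suffix_append s (x :: t)).sublist).nodup hnd), rfl, ?_⟩
  rw [← hl, List.getLast?_append_of_ne_nil _ (List.cons_ne_nil x t)]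

end Helpers


/-- For any gadget `G` of type I or of type II (basic or extended)
with designated vertices `p, q`: (1) `G` contains a `(2,b)`-alternating path `R₀` with
`s_1(R₀) = t_1(R₀) = p` and `t_2(R₀) = q`; (2) from every vertex of `G` there is a
directed path inside `G` ending in `{p,q}`. -/
theorem stmt_8 {V : Type*} [Fintype V] (D : V → V → Prop) (hloop : ∀ v, ¬ D v v)
    (b : ℕ) (hb : 1 ≤ b) :
    (∀ G : TypeIGadget D (4 * b ^ 2),
      (∃ R : AltPath G.arcs 2 b, R.s 0 = G.p ∧ R.t 0 = G.p ∧ R.t 1 = G.q) ∧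
      (∀ x ∈ G.verts, ∃ P : List V, IsDipathList G.arcs P ∧ P.head? = some x ∧
        (P.getLast? = some G.p ∨ P.getLast? = some G.q))) ∧
    (∀ G : BasicIIGadget D b,
      (∃ R : AltPath G.arcs 2 b, R.s 0 = G.p ∧ R.t 0 = G.p ∧ R.t 1 = G.q) ∧
      (∀ x ∈ G.verts, ∃ P : List V, IsDipathList G.arcs P ∧ P.head? = some x ∧
        (P.getLast? = some G.p ∨ P.getLast? = some G.q))) ∧
    (∀ G : ExtIIGadget D b,
      (∃ R : AltPath G.arcs 2 b, R.s 0 = G.p ∧ R.t 0 = G.p ∧ R.t 1 = G.q) ∧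
      (∀ x ∈ G.verts, ∃ P : List V, IsDipathList G.arcs P ∧ P.head? = some x ∧
        (P.getLast? = some G.p ∨ P.getLast? = some G.q))) := by
  have hb2 : 2 ≤ 2 * b ^ 2 := by nlinarith
  refine ⟨fun G => ?_, fun G => ?_, fun G => ?_⟩
  · -- Type I
    have hnd := G.nodup
    simp only [List.nodup_cons, List.mem_cons, not_or] at hnd
    have hpq : G.p ≠ G.q := hnd.1.1
    have harcs : ∀ x y, adjIn (G.p :: G.q :: (G.rest ++ [G.p])) x y → G.arcs x y :=
      fun _ _ h => h
    have hSnd : (G.q :: (G.rest ++ [G.p])).Nodup := by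
      have h := G.nodup
      simp only [List.nodup_cons, List.mem_cons, not_or, List.nodup_append,
        List.mem_append, List.mem_singleton, List.nodup_singleton,
        List.disjoint_singleton] at h ⊢
      refine ⟨⟨h.2.1, fun e => h.1.1 e.symm, by simp⟩, h.2.2, by simp, ?_⟩
      rintro a ha _ (rfl | hb)
      · rintro rfl; exact h.1.2 ha
      · simp at hb
    have hSl : (G.q :: (G.rest ++ [G.p])).getLast? = some G.p := by
      rw [show G.q :: (G.rest ++ [G.p]) = (G.q :: G.rest) ++ [G.p] by simp,
        List.getLast?_append_of_ne_nil _ (by simp)]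
      rfl
    have hlen : b + 1 ≤ (G.q :: (G.rest ++ [G.p])).length := by
      have hg := G.glen
      have h4 : b + 1 ≤ 4 * b ^ 2 := by nlinarith
      simp only [List.length_cons, List.length_append, List.length_singleton]
      omega
    constructor
    · exact altpath_two (Q1 := [G.q]) (S := G.q :: (G.rest ++ [G.p]))
        (isDipath_of_infix harcs ⟨[G.p], [], by simp⟩ (by simp) hSnd)
        rfl hSl hlen ⟨by simp, by simp, List.isChain_singleton _⟩ rfl rfl (by simp [hpq])
        (fun x hx _ => by simpa using hx)
    · intro x hx
      have hx' : x ∈ G.q :: (G.rest ++ [G.p]) := by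
        simp only [TypeIGadget.verts, Set.mem_setOf_eq, List.mem_cons, List.mem_append,
          List.mem_singleton] at hx ⊢
        tauto
      obtain ⟨P, h1, h2, h3⟩ := exists_dipath_to_last
        (l := G.q :: (G.rest ++ [G.p]))
        (fun a c h => harcs a c (adjIn_infix ⟨[G.p], [], by simp⟩ h)) hSnd hSl hx'
      exact ⟨P, h1, h2, Or.inl h3⟩
  · -- Basic II
    constructor
    · exact altpath_of_toq hb G.path₁.2.1 G.last₁ (by have := G.len₁; omega) G.hq
        (fun x y h => Or.inl h) (fun x hx => Or.inr ⟨hx, rfl⟩)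
    · intro x hx
      rcases Set.mem_insert_iff.1 hx with rfl | hx
      · exact ⟨[G.q], ⟨by simp, by simp, List.isChain_singleton _⟩, rfl, Or.inr rfl⟩
      · have hxP : x ∈ G.P₁ := hx
        have hxq : x ≠ G.q := fun h => G.hq (h ▸ hxP)
        refine ⟨[x, G.q], ⟨by simp, by simp [hxq], ?_⟩, rfl, Or.inr (by simp)⟩
        exact List.isChain_cons_cons.2 ⟨Or.inr ⟨hxP, rfl⟩, by simp⟩
  · -- Extended II
    constructor
    · exact altpath_of_toq hb G.path₁.2.1 G.last₁ (by have := G.len₁; omega) G.hq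
        (fun x y h => Or.inl h) (fun x hx => Or.inr (Or.inl ⟨hx, rfl⟩))
    · intro x hx
      rcases Set.mem_insert_iff.1 hx with rfl | hx
      · exact ⟨[G.q], ⟨by simp, by simp, List.isChain_singleton _⟩, rfl, Or.inr rfl⟩
      rcases hx with hx | hx
      · have hxP : x ∈ G.P₁ := hx
        have hxq : x ≠ G.q := fun h => G.hq (h ▸ hxP)
        refine ⟨[x, G.q], ⟨by simp, by simp [hxq], ?_⟩, rfl, Or.inr (by simp)⟩
        exact List.isChain_cons_cons.2 ⟨Or.inr (Or.inl ⟨hxP, rfl⟩), by simp⟩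
      · have hxP : x ∈ G.P₂ := hx
        obtain ⟨s, t, hst⟩ := List.append_of_mem hxP
        have hsuf : x :: t <:+ G.P₂ := ⟨s, hst.symm⟩
        have hxt_nd : (x :: t).Nodup := hsuf.sublist.nodup G.path₂.2.1
        have hr : (x :: t).getLast? = some G.r := by
          rw [← G.last₂, hst, List.getLast?_append_of_ne_nil _ (by simp)]
        have hrP1 : G.r ∈ G.P₁ := List.mem_of_mem_head? (by simp [G.first₁])
        refine ⟨(x :: t) ++ [G.q], ⟨by simp, ?_, ?_⟩, by simp, Or.inr ?_⟩
        · rw [List.nodup_append]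
          refine ⟨hxt_nd, by simp, ?_⟩
          intro a ha
          simp only [List.mem_singleton]
          rintro _ rfl rfl
          exact G.hq₂ (hsuf.subset ha)
        · change List.IsChain _ _
          rw [List.isChain_append]
          refine ⟨(chain'_adjIn_self (x :: t)).imp fun a c h =>
            Or.inr (Or.inr (Or.inl (adjIn_infix hsuf.isInfix h))), by simp, ?_⟩
          intro a ha c hc
          rw [hr] at ha
          simp only [Option.mem_def, Option.some.injEq, List.head?_cons] at ha hc
          subst ha; subst hc
          exact Or.inr (Or.inl ⟨hrP1, rfl⟩)
        · rw [List.getLast?_append_of_ne_nil _ (by simp)]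
          rfl

end Paper
end

section
/- Let b, h, d ≥ 1 be integers, let D' be a digraph and let v ∈ V(D'). Suppose that (1) every vertex of D' reachable from v by a directed path has out-degree at least (h+1)·(d(2b−2)+1)+d, and (2) the number of vertices of D' at distance at most (h+1)(2b−1) from v is less than d^h. Then D' contains a type-III gadget G and a directed path P_0 from v to p(G) such that V(P_0) ∩ V(G) = {p(G)}, |V(G)| ≤ (2h+2)(2b−1) and |V(P_0)| ≤ h(2b−1). -/
namespace Paper

section Aux
open List
variable {D : V → V → Prop}

private lemma head?_take' {l : List V} {n : ℕ} (hn : 0 < n) : (l.take n).head? = l.head? := by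
  cases l with
  | nil => simp
  | cons a t => cases n with
    | zero => omega
    | succ m => simp

private lemma getElem_zero_head? {l : List V} {x : V} (h : l.head? = some x)
    (hl : 0 < l.length) : l[0] = x := by
  cases l with
  | nil => simp at h
  | cons a t => simp_all

private lemma head?_of_getElem_zero {l : List V} (hl : 0 < l.length) :
    l.head? = some (l[0]) := by
  cases l with
  | nil => simp at hl
  | cons a t => simp

private lemma take_getLast? {l : List V} {k : ℕ} (hk : k < l.length) :
    (l.take (k+1)).getLast? = some l[k] := by
  rw [List.getLast?_eq_getElem?]
  have hlen : (l.take (k+1)).length = k + 1 := by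
    rw [List.length_take]; omega
  rw [hlen]
  simp only [Nat.add_sub_cancel]
  rw [List.getElem?_take]
  simp [List.getElem?_eq_getElem hk]

private lemma mem_take_index {l : List V} {n : ℕ} {x : V} (h : x ∈ l.take n) :
    ∃ k, k < n ∧ ∃ hk : k < l.length, l[k] = x := by
  obtain ⟨k, hk, hx⟩ := List.mem_iff_getElem.mp h
  have hk' : k < n ∧ k < l.length := by
    rw [List.length_take] at hk; omega
  refine ⟨k, hk'.1, hk'.2, ?_⟩
  rw [← hx, List.getElem_take]

private lemma chain'_arc {l : List V} (hc : l.Chain' D) {i : ℕ} (h : i + 1 < l.length) :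
    D l[i] (l[i+1]) := by
  have := List.isChain_iff_getElem.mp hc i (by omega)
  simpa using this

lemma dipath_mono {D' : V → V → Prop} (hDD : ∀ a b, D a b → D' a b) {P : List V}
    (h : IsDipathList D P) : IsDipathList D' P :=
  ⟨h.1, h.2.1, List.IsChain.imp (fun a b hab => hDD a b hab) h.2.2⟩

lemma dipath_take {P : List V} (h : IsDipathList D P) {n : ℕ} (hn : 0 < n) :
    IsDipathList D (P.take n) := by
  refine ⟨?_, (List.take_sublist _ _).nodup h.2.1, h.2.2.take n⟩
  have : 0 < P.length := List.length_pos_iff.mpr h.1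
  have : 0 < (P.take n).length := by rw [List.length_take]; omega
  exact List.length_pos_iff.mp this

lemma dipath_tail {P : List V} (h : IsDipathList D P) (hlen : 2 ≤ P.length) :
    IsDipathList D P.tail := by
  refine ⟨?_, h.2.1.tail, h.2.2.tail⟩
  have : 0 < P.tail.length := by rw [List.length_tail]; omega
  exact List.length_pos_iff.mp this

lemma reach_of_mem_dipath {P : List V} {vv x : V} (hc : P.Chain' D)
    (hv : P.head? = some vv) (hx : x ∈ P) : Relation.ReflTransGen D vv x := by
  induction P generalizing vv with
  | nil => simp at hx
  | cons a t ih =>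
    have hav : a = vv := by simpa using hv
    subst hav
    rcases List.mem_cons.mp hx with rfl | hxt
    · exact Relation.ReflTransGen.refl
    · cases t with
      | nil => simp at hxt
      | cons b t' =>
        have hab : D a b := (List.isChain_cons_cons.mp hc).1
        have := ih (List.isChain_cons_cons.mp hc).2 rfl hxt
        exact Relation.ReflTransGen.trans (Relation.ReflTransGen.single hab) this

/-- appending two dipaths that share only the junction vertex -/
lemma dipath_append {P Q : List V} (hP : IsDipathList D P) (hQ : IsDipathList D Q)
    (hlink : P.getLast? = Q.head?)
    (hdisj : ∀ x ∈ P, x ∈ Q → Q.head? = some x) :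
    IsDipathList D (P ++ Q.tail) ∧ (P ++ Q.tail).head? = P.head? ∧
    (P ++ Q.tail).getLast? = Q.getLast? ∧ (P ++ Q.tail).length + 1 = P.length + Q.length := by
  obtain ⟨y, T, rfl⟩ : ∃ y T, Q = y :: T := by
    cases Q with
    | nil => exact absurd rfl hQ.1
    | cons a t => exact ⟨a, t, rfl⟩
  have hPy : P.getLast? = some y := by simpa using hlink
  have hTnodup : T.Nodup := (List.nodup_cons.mp hQ.2.1).2
  have hyT : y ∉ T := (List.nodup_cons.mp hQ.2.1).1
  have hchain : (P ++ T).Chain' D := by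
    show List.IsChain D (P ++ T)
    rw [List.isChain_append]
    refine ⟨hP.2.2, hQ.2.2.tail, ?_⟩
    intro a ha bb hbb
    have hay : a = y := by rw [hPy] at ha; exact (Option.some_inj.mp ha).symm
    subst hay
    exact (List.isChain_cons.mp hQ.2.2).1 bb hbb
  have hnodup : (P ++ T).Nodup := by
    rw [List.nodup_append]
    refine ⟨hP.2.1, hTnodup, ?_⟩
    intro a haP b haT hab
    rw [← hab] at haT
    have := hdisj a haP (by simp [haT])
    have : a = y := by simpa using this.symm
    exact hyT (this ▸ haT)
  have hne : P ++ T ≠ [] := by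
    intro hcontra
    exact hP.1 (List.append_eq_nil_iff.mp hcontra).1
  refine ⟨⟨hne, hnodup, hchain⟩, List.head?_append_of_ne_nil _ hP.1, ?_, by simp; omega⟩
  cases T with
  | nil => simpa using hPy
  | cons b T' =>
    rw [List.getLast?_append_of_ne_nil _ (by simp)]
    simp

section Grow
variable [Fintype V]

lemma exists_extend (u : V) (T : Finset V) (h : T.card < outDeg D u) :
    ∃ w, D u w ∧ w ∉ T := by
  by_contra hcon
  push_neg at hcon
  have hsub : {w | D u w} ⊆ ↑T := fun w hw => hcon w hw
  have hle := Set.ncard_le_ncard hsub (Set.toFinite _)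
  rw [Set.ncard_coe_finset] at hle
  exact absurd (lt_of_lt_of_le h hle) (lt_irrefl _)

lemma grow (v : V) : ∀ (n : ℕ) (S : Finset V) (z : V), z ∉ S →
    Relation.ReflTransGen D v z →
    (∀ u, Relation.ReflTransGen D v u → S.card + n < outDeg D u) →
    ∃ P : List V, IsDipathList D P ∧ P.head? = some z ∧ P.length = n + 1 ∧
      (∀ x ∈ P, x ∉ S) ∧ (∀ x ∈ P, Relation.ReflTransGen D v x) := by
  intro n
  induction n with
  | zero =>
    intro S z hz hreach _
    exact ⟨[z], ⟨by simp, by simp, List.isChain_singleton _⟩, by simp, by simp,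
      by simpa using hz, by simpa using hreach⟩
  | succ n ih =>
    intro S z hz hreach hdeg
    obtain ⟨P, hP, hPhead, hPlen, hPS, hPreach⟩ :=
      ih S z hz hreach (fun u hu => by have := hdeg u hu; omega)
    have hw := List.getLast_mem hP.1
    set w := P.getLast hP.1 with hwdef
    have hwreach := hPreach w hw
    classical
    have hcard : (S ∪ P.toFinset).card < outDeg D w := by
      have h1 : (S ∪ P.toFinset).card ≤ S.card + P.toFinset.card := Finset.card_union_le _ _
      have h2 : P.toFinset.card ≤ P.length := P.toFinset_card_le
      have := hdeg w hwreach
      omega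
    obtain ⟨w', hw', hw'T⟩ := exists_extend w _ hcard
    have hw'P : w' ∉ P := by
      intro hcontra
      exact hw'T (Finset.mem_union_right _ (List.mem_toFinset.mpr hcontra))
    have hw'S : w' ∉ S := fun hcontra => hw'T (Finset.mem_union_left _ hcontra)
    refine ⟨P ++ [w'], ⟨by simp, ?_, ?_⟩, ?_, ?_, ?_, ?_⟩
    · rw [List.nodup_append]
      exact ⟨hP.2.1, by simp, by intro a haP b hb hab; simp at hb; subst hb; subst hab; exact hw'P haP⟩
    · show List.IsChain D (P ++ [w'])
      rw [List.isChain_append]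
      refine ⟨hP.2.2, by simp, ?_⟩
      intro a ha bb hbb
      rw [List.getLast?_eq_getLast hP.1] at ha
      simp at ha hbb
      rw [← ha, ← hbb]
      exact hw'
    · rw [List.head?_append_of_ne_nil _ hP.1]; exact hPhead
    · simp; omega
    · intro x hx
      rcases List.mem_append.mp hx with h | h
      · exact hPS x h
      · simp at h; exact h ▸ hw'S
    · intro x hx
      rcases List.mem_append.mp hx with h | h
      · exact hPreach x h
      · simp at h
        exact h ▸ (Relation.ReflTransGen.tail hwreach hw')

lemma fan_aux (v : V) (L' d : ℕ)
    (hdeg : ∀ u, Relation.ReflTransGen D v u → d * L' < outDeg D u) :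
    ∀ m, m ≤ d → ∃ Fs : List (List V), Fs.length = m ∧
      (∀ P ∈ Fs, IsDipathList D P ∧ P.head? = some v ∧ P.length = L' + 1 ∧
        ∀ x ∈ P, Relation.ReflTransGen D v x) ∧
      Fs.Pairwise (fun P P' => ∀ x ∈ P, x ∈ P' → x = v) := by
  intro m
  induction m with
  | zero => exact fun _ => ⟨[], rfl, by simp, by simp⟩
  | succ m ih =>
    intro hm
    obtain ⟨Fs, hlen, hprops, hpair⟩ := ih (by omega)
    classical
    set S : Finset V := (Fs.map List.tail).flatten.toFinset with hS
    have hScard : S.card ≤ m * L' := by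
      have h1 : S.card ≤ (Fs.map List.tail).flatten.length := List.toFinset_card_le _
      have h2 : (Fs.map List.tail).flatten.length ≤ m * L' := by
        rw [List.length_flatten]
        have : ∀ x ∈ (Fs.map List.tail).map List.length, x ≤ L' := by
          intro x hx
          simp only [List.map_map, List.mem_map] at hx
          obtain ⟨P, hP, rfl⟩ := hx
          have := (hprops P hP).2.2.1
          simp [List.length_tail, this]
        have hsum := List.sum_le_card_nsmul _ L' this
        simp only [List.length_map, hlen, smul_eq_mul] at hsum
        exact hsum
      omega
    have hmemS : ∀ x, x ∈ S ↔ ∃ P ∈ Fs, x ∈ P.tail := by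
      intro x
      simp [hS, List.mem_flatten]
    have hvS : v ∉ S := by
      rw [hmemS]
      rintro ⟨P, hPmem, hvtail⟩
      obtain ⟨hPdp, hPhead, _, _⟩ := hprops P hPmem
      cases P with
      | nil => simp at hvtail
      | cons a t =>
        have : a = v := by simpa using hPhead
        subst this
        exact (List.nodup_cons.mp hPdp.2.1).1 hvtail
    obtain ⟨B, hB, hBhead, hBlen, hBS, hBreach⟩ :=
      grow v L' S v hvS Relation.ReflTransGen.refl
        (fun u hu => by
          have h1 := hdeg u hu
          have h2 : S.card + L' ≤ d * L' := by
            have h4 : (m+1) * L' ≤ d * L' := Nat.mul_le_mul_right _ hm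
            have h5 : m * L' + L' = (m+1) * L' := by ring
            omega
          omega)
    refine ⟨B :: Fs, by simp [hlen], ?_, ?_⟩
    · rintro P hP
      rcases List.mem_cons.mp hP with rfl | hPmem
      · exact ⟨hB, hBhead, hBlen, hBreach⟩
      · exact hprops P hPmem
    · rw [List.pairwise_cons]
      refine ⟨?_, hpair⟩
      intro P hPmem x hxB hxP
      by_contra hxv
      obtain ⟨hPdp, hPhead, _, _⟩ := hprops P hPmem
      have hxtail : x ∈ P.tail := by
        cases P with
        | nil => simp at hxP
        | cons a t =>
          have : a = v := by simpa using hPhead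
          subst this
          rcases List.mem_cons.mp hxP with rfl | h
          · exact absurd rfl hxv
          · exact h
      exact hBS x hxB ((hmemS x).mpr ⟨P, hPmem, hxtail⟩)

lemma fan (v : V) (L' d : ℕ)
    (hdeg : ∀ u, Relation.ReflTransGen D v u → d * L' < outDeg D u) :
    ∃ F : Fin d → List V,
      (∀ c, IsDipathList D (F c) ∧ (F c).head? = some v ∧ (F c).length = L' + 1 ∧
        ∀ x ∈ F c, Relation.ReflTransGen D v x) ∧
      (∀ c c', c ≠ c' → ∀ x ∈ F c, x ∈ F c' → x = v) := by
  obtain ⟨Fs, hlen, hprops, hpair⟩ := fan_aux v L' d hdeg d le_rfl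
  have hget := List.pairwise_iff_get.mp hpair
  refine ⟨fun c => Fs.get (Fin.cast hlen.symm c),
    fun c => hprops _ (List.get_mem ..), ?_⟩
  intro c c' hne x hx hx'
  rcases lt_trichotomy ((Fin.cast hlen.symm c) : Fin Fs.length)
      ((Fin.cast hlen.symm c') : Fin Fs.length) with h | h | h
  · exact hget _ _ h x hx hx'
  · exact absurd (by simpa using congrArg (Fin.cast hlen) h) hne
  · exact hget _ _ h x hx' hx

end Grow

section Surgery

private lemma ncard_mem_le (l : List V) : {x | x ∈ l}.ncard ≤ l.length := by
  classical
  have h : {x | x ∈ l} = ↑l.toFinset := by ext x; simp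
  rw [h, Set.ncard_coe_finset]
  exact l.toFinset_card_le

lemma surgery (b : ℕ) (hb : 1 ≤ b) (v xs : V) (B B' Q Q' : List V)
    (hA : IsDipathList D (B ++ Q)) (hA' : IsDipathList D (B' ++ Q'))
    (lenB : B.length = 2*b - 1) (lenB' : B'.length = 2*b - 1)
    (headB : B.head? = some v) (headB' : B'.head? = some v)
    (hQne : Q ≠ []) (hQ'ne : Q' ≠ [])
    (lastA : (B ++ Q).getLast? = some xs) (lastA' : (B' ++ Q').getLast? = some xs)
    (hBB' : ∀ x ∈ B, x ∈ B' → x = v)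
    (hQB' : ∀ x ∈ Q, x ∉ B') (hQ'B : ∀ x ∈ Q', x ∉ B)
    (hheads : Q.head? ≠ Q'.head?) :
    ∃ G : TypeIIIGadget D b, G.p = v ∧
      G.verts.ncard + 2 ≤ (B ++ Q).length + (B' ++ Q').length := by
  classical
  set A := B ++ Q with hAdef
  set A' := B' ++ Q' with hA'def
  have hQlen : 1 ≤ Q.length := List.length_pos_iff.mpr hQne
  have hQ'len : 1 ≤ Q'.length := List.length_pos_iff.mpr hQ'ne
  have hL1 : 1 ≤ B.length := by omega
  have hLL' : B.length = B'.length := by omega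
  have hAlen : A.length = B.length + Q.length := by
    rw [hAdef]; simp
  have hA'len : A'.length = B'.length + Q'.length := by
    rw [hA'def]; simp
  have hBne : B ≠ [] := by
    intro h; rw [h] at lenB; simp at lenB; omega
  have hB'ne : B' ≠ [] := by
    intro h; rw [h] at lenB'; simp at lenB'; omega
  have hAhead : A.head? = some v := by
    rw [hAdef, List.head?_append_of_ne_nil _ hBne]; exact headB
  have hA'head : A'.head? = some v := by
    rw [hA'def, List.head?_append_of_ne_nil _ hB'ne]; exact headB'
  have hA0 : A[0]'(by omega) = v := getElem_zero_head? hAhead (by omega)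
  have hA'0 : A'[0]'(by omega) = v := getElem_zero_head? hA'head (by omega)
  -- membership structure
  have memA_lt : ∀ k (hk : k < B.length), A[k]'(by omega) ∈ B := by
    intro k hk
    have h : A[k]'(by omega) = B[k]'hk := List.getElem_append_left hk
    rw [h]; exact List.getElem_mem _
  have memA'_lt : ∀ k (hk : k < B'.length), A'[k]'(by omega) ∈ B' := by
    intro k hk
    have h : A'[k]'(by omega) = B'[k]'hk := List.getElem_append_left hk
    rw [h]; exact List.getElem_mem _
  have memA_geQ : ∀ k (hk1 : B.length ≤ k) (hk2 : k < A.length), A[k]'hk2 ∈ Q := by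
    intro k hk1 hk2
    have h : A[k]'hk2 = Q[k - B.length]'(by omega) := List.getElem_append_right hk1
    rw [h]; exact List.getElem_mem _
  have memA'_geQ : ∀ k (hk1 : B'.length ≤ k) (hk2 : k < A'.length), A'[k]'hk2 ∈ Q' := by
    intro k hk1 hk2
    have h : A'[k]'hk2 = Q'[k - B'.length]'(by omega) := List.getElem_append_right hk1
    rw [h]; exact List.getElem_mem _
  have hAgetB : A[B.length]'(by omega) = Q[0]'(by omega) := by
    have h : A[B.length]'(by omega) = Q[B.length - B.length]'(by omega) := List.getElem_append_right le_rfl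
    simpa using h
  have hA'getB : A'[B'.length]'(by omega) = Q'[0]'(by omega) := by
    have h : A'[B'.length]'(by omega) = Q'[B'.length - B'.length]'(by omega) := List.getElem_append_right le_rfl
    simpa using h
  -- first collision on A'
  have hexist : ∃ k, 1 ≤ k ∧ ∃ hk : k < A'.length, A'[k]'hk ∈ A := by
    refine ⟨A'.length - 1, by omega, by omega, ?_⟩
    have h1 : A'[A'.length - 1]? = some xs := by
      rw [← List.getLast?_eq_getElem?]; exact lastA'
    have h3 : A'[A'.length - 1]? = some (A'[A'.length - 1]'(by omega)) :=
      List.getElem?_eq_getElem (by omega)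
    rw [h1] at h3
    rw [(Option.some_inj.mp h3).symm]
    exact List.mem_of_getLast? lastA
  set t := Nat.find hexist with htdef
  obtain ⟨ht1, htlt, htw⟩ := Nat.find_spec hexist
  have hmin : ∀ k, 1 ≤ k → k < t → ∀ hk : k < A'.length, A'[k]'hk ∉ A := by
    intro k h1 h2 hk hmem
    exact Nat.find_min hexist h2 ⟨h1, hk, hmem⟩
  set w := A'[t]'htlt with hwdef
  obtain ⟨s, hslt, hsw⟩ := List.mem_iff_getElem.mp htw
  have hnodupA := hA.2.1
  have hnodupA' := hA'.2.1
  have hwv : w ≠ v := by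
    intro h
    have h2 : A'[t]'htlt = A'[0]'(by omega) := by rw [hA'0]; exact h
    have h3 := (List.Nodup.getElem_inj_iff hnodupA').mp h2
    omega
  have hs1 : 1 ≤ s := by
    rcases Nat.eq_zero_or_pos s with h0 | h
    · exfalso
      apply hwv
      rw [← hsw]
      subst h0
      exact hA0
    · exact h
  have hsL : B.length ≤ s := by
    by_contra hcon
    push_neg at hcon
    have hwB : w ∈ B := by rw [← hsw]; exact memA_lt s hcon
    rcases Nat.lt_or_ge t B'.length with htl | htg
    · have hwB' : w ∈ B' := by rw [hwdef]; exact memA'_lt t htl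
      exact hwv (hBB' w hwB hwB')
    · have hwQ' : w ∈ Q' := by rw [hwdef]; exact memA'_geQ t htg htlt
      exact hQ'B w hwQ' hwB
  have htL : B.length ≤ t := by
    by_contra hcon
    push_neg at hcon
    have hwB' : w ∈ B' := by rw [hwdef]; exact memA'_lt t (by omega)
    have hwQ : w ∈ Q := by rw [← hsw]; exact memA_geQ s hsL hslt
    exact hQB' w hwQ hwB'
  have hne2 : ¬ (s = B.length ∧ t = B.length) := by
    rintro ⟨rfl, h2⟩
    apply hheads
    have e1 : Q.head? = some (Q[0]'(by omega)) := head?_of_getElem_zero (by omega)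
    have e2 : Q'.head? = some (Q'[0]'(by omega)) := head?_of_getElem_zero (by omega)
    rw [e1, e2]
    congr 1
    rw [← hAgetB, ← hA'getB, hsw, hwdef]
    congr 1
    omega
  -- two cases
  rcases Nat.lt_or_ge t (B.length + 1) with htcase | htcase
  · -- t = B.length, so s ≥ B.length + 1 : mirrored gadget
    have htB : t = B.length := by omega
    have hsB1 : B.length + 1 ≤ s := by
      rcases Nat.lt_or_ge s (B.length + 1) with h | h
      · exact absurd ⟨by omega, by omega⟩ hne2
      · exact h
    have h1lt : 1 < A.length := by omega
    set q := A[1]'h1lt with hqdef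
    have harc : D v q := by
      have := chain'_arc hA.2.2 (i := 0) (by omega)
      rw [hA0] at this
      exact this
    set P₁ := A'.take (t+1) with hP₁def
    set P₂ := A.tail.take s with hP₂def
    have hP₁dp : IsDipathList D P₁ := dipath_take hA' (by omega)
    have hP₂dp : IsDipathList D P₂ := dipath_take (dipath_tail hA (by omega)) (by omega)
    have hP₁len : P₁.length = t + 1 := by
      rw [hP₁def, List.length_take]; omega
    have hP₂len : P₂.length = s := by
      rw [hP₂def, List.length_take, List.length_tail]; omega
    have hP₁head : P₁.head? = some v := by
      rw [hP₁def, head?_take' (by omega)]; exact hA'head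
    have hP₂head : P₂.head? = some q := by
      rw [hP₂def, head?_take' (by omega)]
      have h0 : 0 < A.tail.length := by rw [List.length_tail]; omega
      rw [head?_of_getElem_zero h0]
      congr 1
      exact List.getElem_tail h0
    have hP₁last : P₁.getLast? = some w := by
      rw [hP₁def, take_getLast? htlt]
    have hP₂last : P₂.getLast? = some w := by
      have hs' : s - 1 + 1 = s := by omega
      have hlt : s - 1 < A.tail.length := by rw [List.length_tail]; omega
      rw [hP₂def, ← hs', take_getLast? hlt]
      congr 1
      have := List.getElem_tail (l := A) (i := s-1) hlt
      rw [this]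
      have : s - 1 + 1 = s := by omega
      rw [← hsw]
      congr 1
    have hinter : ∀ x ∈ P₁, x ∈ P₂ → x = w := by
      intro x hx1 hx2
      obtain ⟨i', hi's, hi'lt, hieq⟩ := mem_take_index hx2
      have hi'lt2 : i' + 1 < A.length := by
        rw [List.length_tail] at hi'lt; omega
      have hxA : A[i'+1]'hi'lt2 = x := by
        rw [← hieq]
        exact (List.getElem_tail hi'lt).symm
      obtain ⟨k, hkt, hklt, hkeq⟩ := mem_take_index hx1
      rcases Nat.eq_zero_or_pos k with hk0 | hk1
      · exfalso
        subst hk0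
        have hxv : x = v := by rw [← hkeq]; exact hA'0
        have : A[i'+1]'hi'lt2 = A[0]'(by omega) := by rw [hA0, hxA, hxv]
        have := (List.Nodup.getElem_inj_iff hnodupA).mp this
        omega
      · rcases Nat.lt_or_ge k t with hklt2 | hkge
        · exfalso
          apply hmin k hk1 hklt2 hklt
          rw [hkeq, ← hxA]
          exact List.getElem_mem _
        · have hkt' : k = t := by omega
          rw [← hkeq, hwdef]
          exact (List.Nodup.getElem_inj_iff hnodupA').mpr hkt'
    have hlen1 : 2*b ≤ P₁.length := by rw [hP₁len]; omega
    have hlen2 : 2*b ≤ P₂.length := by rw [hP₂len]; omega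
    refine ⟨⟨v, q, w, harc, P₁, P₂, hP₁dp, hP₂dp, hP₁head, hP₂head, hP₁last, hP₂last,
      hlen1, hlen2, hinter⟩, rfl, ?_⟩
    show ({x | x ∈ P₁} ∪ {x | x ∈ P₂} : Set V).ncard + 2 ≤ A.length + A'.length
    -- size bound
    have hwP₁ : w ∈ P₁ := List.mem_of_getLast? hP₁last
    have hP₂ne : P₂ ≠ [] := by
      intro h; rw [h] at hP₂len; simp at hP₂len; omega
    have hsub : ({x | x ∈ P₁} ∪ {x | x ∈ P₂} : Set V) ⊆
        {x | x ∈ P₁} ∪ {x | x ∈ P₂.dropLast} := by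
      intro x hx
      rcases hx with hx | hx
      · exact Or.inl hx
      · have hxP₂ : x ∈ P₂ := hx
        have hsplit : P₂ = P₂.dropLast ++ [P₂.getLast hP₂ne] :=
          (List.dropLast_append_getLast hP₂ne).symm
        have hlastval : P₂.getLast hP₂ne = w := by
          have := List.getLast?_eq_getLast hP₂ne
          rw [hP₂last] at this
          exact (Option.some_inj.mp this).symm
        rw [hsplit] at hxP₂
        rcases List.mem_append.mp hxP₂ with h | h
        · exact Or.inr h
        · simp at h
          rw [h, hlastval]
          exact Or.inl hwP₁
    have hcard := Set.ncard_le_ncard hsub (Set.Finite.union (List.finite_toSet _) (List.finite_toSet _))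
    have hcard2 := Set.ncard_union_le {x | x ∈ P₁} {x | x ∈ P₂.dropLast}
    have hc1 := ncard_mem_le P₁
    have hc2 := ncard_mem_le P₂.dropLast
    have hdl : P₂.dropLast.length = s - 1 := by
      rw [List.length_dropLast, hP₂len]
    omega
  · -- t ≥ B.length + 1, s ≥ B.length : direct gadget
    have h1lt : 1 < A'.length := by omega
    set q := A'[1]'h1lt with hqdef
    have harc : D v q := by
      have := chain'_arc hA'.2.2 (i := 0) (by omega)
      rw [hA'0] at this
      exact this
    set P₁ := A.take (s+1) with hP₁def
    set P₂ := A'.tail.take t with hP₂def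
    have hP₁dp : IsDipathList D P₁ := dipath_take hA (by omega)
    have hP₂dp : IsDipathList D P₂ := dipath_take (dipath_tail hA' (by omega)) (by omega)
    have hP₁len : P₁.length = s + 1 := by
      rw [hP₁def, List.length_take]; omega
    have hP₂len : P₂.length = t := by
      rw [hP₂def, List.length_take, List.length_tail]; omega
    have hP₁head : P₁.head? = some v := by
      rw [hP₁def, head?_take' (by omega)]; exact hAhead
    have hP₂head : P₂.head? = some q := by
      rw [hP₂def, head?_take' (by omega)]
      have h0 : 0 < A'.tail.length := by rw [List.length_tail]; omega
      rw [head?_of_getElem_zero h0]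
      congr 1
      exact List.getElem_tail h0
    have hP₁last : P₁.getLast? = some w := by
      rw [hP₁def, take_getLast? hslt, hsw]
    have hP₂last : P₂.getLast? = some w := by
      have ht' : t - 1 + 1 = t := by omega
      have hlt : t - 1 < A'.tail.length := by rw [List.length_tail]; omega
      rw [hP₂def, ← ht', take_getLast? hlt]
      congr 1
      have := List.getElem_tail (l := A') (i := t-1) hlt
      rw [this, hwdef]
      congr 1
    have hinter : ∀ x ∈ P₁, x ∈ P₂ → x = w := by
      intro x hx1 hx2
      obtain ⟨i', hi't, hi'lt, hieq⟩ := mem_take_index hx2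
      have hi'lt2 : i' + 1 < A'.length := by
        rw [List.length_tail] at hi'lt; omega
      have hxA' : A'[i'+1]'hi'lt2 = x := by
        rw [← hieq]
        exact (List.getElem_tail hi'lt).symm
      rcases Nat.lt_or_ge (i'+1) t with hklt2 | hkge
      · exfalso
        apply hmin (i'+1) (by omega) hklt2 hi'lt2
        rw [hxA']
        exact List.mem_of_mem_take hx1
      · have hkt' : i' + 1 = t := by omega
        rw [← hxA', hwdef]
        exact (List.Nodup.getElem_inj_iff hnodupA').mpr hkt'
    have hlen1 : 2*b ≤ P₁.length := by rw [hP₁len]; omega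
    have hlen2 : 2*b ≤ P₂.length := by rw [hP₂len]; omega
    refine ⟨⟨v, q, w, harc, P₁, P₂, hP₁dp, hP₂dp, hP₁head, hP₂head, hP₁last, hP₂last,
      hlen1, hlen2, hinter⟩, rfl, ?_⟩
    show ({x | x ∈ P₁} ∪ {x | x ∈ P₂} : Set V).ncard + 2 ≤ A.length + A'.length
    have hwP₁ : w ∈ P₁ := List.mem_of_getLast? hP₁last
    have hP₂ne : P₂ ≠ [] := by
      intro h; rw [h] at hP₂len; simp at hP₂len; omega
    have hsub : ({x | x ∈ P₁} ∪ {x | x ∈ P₂} : Set V) ⊆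
        {x | x ∈ P₁} ∪ {x | x ∈ P₂.dropLast} := by
      intro x hx
      rcases hx with hx | hx
      · exact Or.inl hx
      · have hxP₂ : x ∈ P₂ := hx
        have hsplit : P₂ = P₂.dropLast ++ [P₂.getLast hP₂ne] :=
          (List.dropLast_append_getLast hP₂ne).symm
        have hlastval : P₂.getLast hP₂ne = w := by
          have := List.getLast?_eq_getLast hP₂ne
          rw [hP₂last] at this
          exact (Option.some_inj.mp this).symm
        rw [hsplit] at hxP₂
        rcases List.mem_append.mp hxP₂ with h | h
        · exact Or.inr h
        · simp at h
          rw [h, hlastval]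
          exact Or.inl hwP₁
    have hcard := Set.ncard_le_ncard hsub (Set.Finite.union (List.finite_toSet _) (List.finite_toSet _))
    have hcard2 := Set.ncard_union_le {x | x ∈ P₁} {x | x ∈ P₂.dropLast}
    have hc1 := ncard_mem_le P₁
    have hc2 := ncard_mem_le P₂.dropLast
    have hdl : P₂.dropLast.length = t - 1 := by
      rw [List.length_dropLast, hP₂len]
    omega

end Surgery

section MainAux

private lemma head?_dropLast {l : List V} (h : 2 ≤ l.length) :
    l.dropLast.head? = l.head? := by
  cases l with
  | nil => simp at h
  | cons a t =>
    cases t with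
    | nil => simp at h
    | cons b t' => simp

private lemma getLast_not_mem_dropLast {l : List V} (hn : l.Nodup) (h : l ≠ []) :
    l.getLast h ∉ l.dropLast := by
  have hsplit : l.dropLast ++ [l.getLast h] = l := List.dropLast_append_getLast h
  rw [← hsplit] at hn
  rw [List.nodup_append] at hn
  intro hmem
  exact hn.2.2 _ hmem _ (by simp) rfl

private lemma mem_of_head? {l : List V} {z : V} (h : l.head? = some z) : z ∈ l := by
  cases l with
  | nil => simp at h
  | cons a t =>
    simp at h
    simp [h]

private lemma chain'_head_prop {R : V → V → Prop} {Pr : V → Prop}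
    (hR : ∀ a b, R a b → Pr b) : ∀ {l : List V}, l.Chain' R → ∀ {z}, l.head? = some z →
      Pr z → ∀ x ∈ l, Pr x := by
  intro l
  induction l with
  | nil => intro _ z _ _ x hx; simp at hx
  | cons a T ih =>
    intro hc z hz hPz x hx
    have haz : a = z := by simpa using hz
    rcases List.mem_cons.mp hx with rfl | hxT
    · exact haz ▸ hPz
    · cases T with
      | nil => simp at hxT
      | cons bb T' =>
        have hab : R a bb := (List.isChain_cons_cons.mp hc).1
        exact ih (List.isChain_cons_cons.mp hc).2 rfl (hR a bb hab) x hxT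

private lemma chain'_all_prop {R : V → V → Prop} {Pr : V → Prop}
    (hR : ∀ a b, R a b → Pr a ∧ Pr b) : ∀ {l : List V}, l.Chain' R → 2 ≤ l.length →
      ∀ x ∈ l, Pr x := by
  intro l
  induction l with
  | nil => intro _ h; simp at h
  | cons a T ih =>
    intro hc hlen x hx
    cases T with
    | nil => simp at hlen
    | cons bb T' =>
      have hab : R a bb := (List.isChain_cons_cons.mp hc).1
      rcases List.mem_cons.mp hx with rfl | hxT
      · exact (hR _ _ hab).1
      · cases T' with
        | nil =>
          simp at hxT
          exact hxT ▸ (hR a bb hab).2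
        | cons cc T'' =>
          exact ih (List.isChain_cons_cons.mp hc).2 (by simp only [List.length_cons]; omega) x hxT

variable [Fintype V]

theorem aux (b d : ℕ) (hb : 1 ≤ b) (hd : 1 ≤ d) :
    ∀ (h : ℕ) (D : V → V → Prop), (∀ x, ¬ D x x) → ∀ (v : V),
    (∀ u, Relation.ReflTransGen D v u → (h + 1) * (d * (2 * b - 2) + 1) + d ≤ outDeg D u) →
    (({u | ∃ P : List V, IsDipathList D P ∧ P.head? = some v ∧
        P.getLast? = some u ∧ P.length ≤ (h + 1) * (2 * b - 1) + 1}).ncard < d ^ h) →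
    ∃ (G : TypeIIIGadget D b) (P₀ : List V),
      IsDipathList D P₀ ∧ P₀.head? = some v ∧ P₀.getLast? = some G.p ∧
      (∀ x ∈ P₀, x ∈ G.verts → x = G.p) ∧
      G.verts.ncard ≤ (2 * h + 2) * (2 * b - 1) ∧
      P₀.length ≤ h * (2 * b - 1) := by
  intro h
  induction h with
  | zero =>
    intro D hloop v hdeg hdist
    exfalso
    have hv : v ∈ {u | ∃ P : List V, IsDipathList D P ∧ P.head? = some v ∧
        P.getLast? = some u ∧ P.length ≤ (0 + 1) * (2 * b - 1) + 1} := by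
      refine ⟨[v], ⟨by simp, by simp, List.isChain_singleton _⟩, by simp, by simp, ?_⟩
      simp only [List.length_cons, List.length_nil]
      omega
    have hpos : 0 < ({u | ∃ P : List V, IsDipathList D P ∧ P.head? = some v ∧
        P.getLast? = some u ∧ P.length ≤ (0 + 1) * (2 * b - 1) + 1}).ncard := by
      rw [Set.ncard_pos (Set.toFinite _)]
      exact ⟨v, hv⟩
    rw [pow_zero] at hdist
    omega
  | succ h ih =>
    intro D hloop v hdeg hdist
    classical
    -- build the fan at v
    have hfan_deg : ∀ u, Relation.ReflTransGen D v u → d * (2*b-1) < outDeg D u := by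
      intro u hu
      have h1 := hdeg u hu
      have h2 : d * (2*b-1) = d * (2*b-2) + d := by
        have h3 : 2*b-1 = (2*b-2)+1 := by omega
        rw [h3]; ring
      have h4 : d*(2*b-2)+1 ≤ (h+1+1)*(d*(2*b-2)+1) := Nat.le_mul_of_pos_left _ (by omega)
      omega
    obtain ⟨F, hFc, hFpair⟩ := fan v (2*b-1) d hfan_deg
    have hFne : ∀ c, F c ≠ [] := fun c => (hFc c).1.1
    set y : Fin d → V := fun c => (F c).getLast (hFne c) with hydef
    have hylast : ∀ c, (F c).getLast? = some (y c) := fun c =>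
      List.getLast?_eq_getLast (hFne c)
    have hymem : ∀ c, y c ∈ F c := fun c => List.getLast_mem (hFne c)
    have hFlen : ∀ c, (F c).length = (2*b-1) + 1 := fun c => (hFc c).2.2.1
    have hFhead : ∀ c, (F c).head? = some v := fun c => (hFc c).2.1
    have hyv : ∀ c, y c ≠ v := by
      intro c hcon
      have hv0 : (F c)[0]'(by rw [hFlen c]; omega) = v :=
        getElem_zero_head? (hFhead c) (by rw [hFlen c]; omega)
      have hyg : y c = (F c)[(F c).length - 1]'(by rw [hFlen c]; omega) :=
        List.getLast_eq_getElem (l := F c) (hFne c)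
      have : (F c)[(F c).length - 1]'(by rw [hFlen c]; omega) =
          (F c)[0]'(by rw [hFlen c]; omega) := by rw [← hyg, hcon, hv0]
      have := (List.Nodup.getElem_inj_iff (hFc c).1.2.1).mp this
      rw [hFlen c] at this
      omega
    -- the deleted set X
    set X : Finset V := insert v (Finset.univ.biUnion fun c => ((F c).dropLast.tail).toFinset)
      with hXdef
    have hXcard : X.card ≤ d * (2*b-2) + 1 := by
      have h1 : X.card ≤ (Finset.univ.biUnion fun c => ((F c).dropLast.tail).toFinset).card + 1 :=
        Finset.card_insert_le _ _
      have h2 : (Finset.univ.biUnion fun c => ((F c).dropLast.tail).toFinset).card ≤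
          ∑ c : Fin d, ((F c).dropLast.tail).toFinset.card := Finset.card_biUnion_le
      have h3 : ∀ c : Fin d, ((F c).dropLast.tail).toFinset.card ≤ 2*b-2 := by
        intro c
        have := List.toFinset_card_le ((F c).dropLast.tail)
        have hlen : ((F c).dropLast.tail).length = 2*b-2 := by
          rw [List.length_tail, List.length_dropLast, hFlen c]
          omega
        omega
      have h4 : ∑ c : Fin d, ((F c).dropLast.tail).toFinset.card ≤ ∑ _c : Fin d, (2*b-2) :=
        Finset.sum_le_sum (fun c _ => h3 c)
      have h5 : ∑ _c : Fin d, (2*b-2) = d * (2*b-2) := by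
        rw [Finset.sum_const]
        simp [mul_comm]
      omega
    have hvX : v ∈ X := Finset.mem_insert_self _ _
    have hdropX : ∀ c, ∀ x ∈ (F c).dropLast, x ∈ X := by
      intro c x hx
      have hlen2 : 2 ≤ (F c).length := by rw [hFlen c]; omega
      have hdlne : (F c).dropLast ≠ [] := by
        intro hcon
        have := List.length_dropLast (xs := F c)
        rw [hcon] at this
        simp at this
        omega
      have hdlhead : (F c).dropLast.head? = some v := by
        rw [head?_dropLast hlen2]; exact hFhead c
      obtain ⟨z, T, hzT⟩ : ∃ z T, (F c).dropLast = z :: T := by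
        cases hdl : (F c).dropLast with
        | nil => exact absurd hdl hdlne
        | cons z T => exact ⟨z, T, rfl⟩
      have hzv : z = v := by rw [hzT] at hdlhead; simpa using hdlhead
      rw [hzT] at hx
      rcases List.mem_cons.mp hx with rfl | hxT
      · exact hzv ▸ hvX
      · rw [hXdef]
        apply Finset.mem_insert_of_mem
        rw [Finset.mem_biUnion]
        refine ⟨c, Finset.mem_univ _, ?_⟩
        rw [List.mem_toFinset, hzT]
        simpa using hxT
    have hyX : ∀ c, y c ∉ X := by
      intro c hcon
      rw [hXdef, Finset.mem_insert] at hcon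
      rcases hcon with hcon | hcon
      · exact hyv c hcon
      · rw [Finset.mem_biUnion] at hcon
        obtain ⟨c', _, hc'⟩ := hcon
        rw [List.mem_toFinset] at hc'
        have hmemdl : y c ∈ (F c').dropLast := List.mem_of_mem_tail hc'
        have hmemF : y c ∈ F c' := List.dropLast_subset _ hmemdl
        by_cases hcc : c = c'
        · subst hcc
          exact getLast_not_mem_dropLast (hFc c).1.2.1 (hFne c) hmemdl
        · exact hyv c (hFpair c c' hcc (y c) (hymem c) hmemF)
    -- the restricted digraph
    set D' : V → V → Prop := fun a b' => D a b' ∧ a ∉ X ∧ b' ∉ X with hD'def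
    have hloop' : ∀ x, ¬ D' x x := fun x hcon => hloop x hcon.1
    have hD'D : ∀ a b', D' a b' → D a b' := fun _ _ hh => hh.1
    have hreachyv : ∀ c, Relation.ReflTransGen D v (y c) :=
      fun c => reach_of_mem_dipath (hFc c).1.2.2 (hFhead c) (hymem c)
    have hreach' : ∀ (c : Fin d) u, Relation.ReflTransGen D' (y c) u →
        Relation.ReflTransGen D v u := by
      intro c u hu
      exact (hreachyv c).trans (Relation.ReflTransGen.mono hD'D _ _ hu)
    have hXreach : ∀ (c : Fin d) u, Relation.ReflTransGen D' (y c) u → u ∉ X := by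
      intro c u hu
      induction hu with
      | refl => exact hyX c
      | tail _ harc ih2 => exact harc.2.2
    have hdeg' : ∀ (c : Fin d) u, Relation.ReflTransGen D' (y c) u →
        (h + 1) * (d * (2 * b - 2) + 1) + d ≤ outDeg D' u := by
      intro c u hu
      have h1 := hdeg u (hreach' c u hu)
      have huX := hXreach c u hu
      have h2 : {w | D u w} ⊆ {w | D' u w} ∪ ↑X := by
        intro w hw
        by_cases hwX : w ∈ X
        · exact Or.inr hwX
        · exact Or.inl ⟨hw, huX, hwX⟩
      have h3 : outDeg D u ≤ outDeg D' u + X.card := by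
        have h4 := Set.ncard_le_ncard h2 (Set.toFinite _)
        have h5 := Set.ncard_union_le {w | D' u w} (↑X : Set V)
        rw [Set.ncard_coe_finset] at h5
        unfold outDeg
        omega
      have h6 : (h+1+1)*(d*(2*b-2)+1) = (h+1)*(d*(2*b-2)+1) + (d*(2*b-2)+1) := by ring
      omega
    -- the balls around the fan endpoints
    set U : Fin d → Set V := fun c => {u | ∃ P : List V, IsDipathList D' P ∧
      P.head? = some (y c) ∧ P.getLast? = some u ∧ P.length ≤ (h + 1) * (2 * b - 1) + 1}
      with hUdef
    set W : Set V := {u | ∃ P : List V, IsDipathList D P ∧ P.head? = some v ∧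
      P.getLast? = some u ∧ P.length ≤ (h + 1 + 1) * (2 * b - 1) + 1} with hWdef
    -- concatenation of a branch with a D'-path from its endpoint
    have hconcat : ∀ (c : Fin d) (Q : List V), IsDipathList D' Q → Q.head? = some (y c) →
        IsDipathList D (F c ++ Q.tail) ∧ (F c ++ Q.tail).head? = some v ∧
        (F c ++ Q.tail).getLast? = Q.getLast? ∧
        (F c ++ Q.tail).length + 1 = (F c).length + Q.length ∧
        (F c).dropLast ++ Q = F c ++ Q.tail := by
      intro c Q hQdp hQhead
      have hQD : IsDipathList D Q := dipath_mono hD'D hQdp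
      have hQavoid : ∀ x ∈ Q, x ∉ X :=
        chain'_head_prop (fun a b' hab => hab.2.2) hQdp.2.2 hQhead (hyX c)
      have hlink : (F c).getLast? = Q.head? := by rw [hylast c, hQhead]
      have hdisj : ∀ x ∈ F c, x ∈ Q → Q.head? = some x := by
        intro x hxF hxQ
        have hxX := hQavoid x hxQ
        have hxndl : x ∉ (F c).dropLast := fun hcon => hxX (hdropX c x hcon)
        have hsplit : (F c).dropLast ++ [y c] = F c := List.dropLast_append_getLast (hFne c)
        rw [← hsplit] at hxF
        rcases List.mem_append.mp hxF with hcon | hxy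
        · exact absurd hcon hxndl
        · simp at hxy
          rw [hQhead, hxy]
      obtain ⟨hdp, hhead, hlast, hlen⟩ := dipath_append (hFc c).1 hQD hlink hdisj
      have hQcons : Q = y c :: Q.tail := by
        cases Q with
        | nil => exact absurd rfl hQdp.1
        | cons a T =>
          have ha : a = y c := by simpa using hQhead
          subst ha
          rfl
      have heq : (F c).dropLast ++ Q = F c ++ Q.tail := by
        conv_rhs => rw [← List.dropLast_append_getLast (hFne c)]
        rw [List.append_assoc, List.singleton_append, ← hQcons]
      exact ⟨hdp, by rw [hhead]; exact hFhead c, hlast, hlen, heq⟩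
    have hUW : ∀ c, U c ⊆ W := by
      intro c u hu
      obtain ⟨Q, hQdp, hQhead, hQlast, hQlen⟩ := hu
      obtain ⟨hdp, hhead, hlast, hlen, _⟩ := hconcat c Q hQdp hQhead
      refine ⟨F c ++ Q.tail, hdp, hhead, by rw [hlast]; exact hQlast, ?_⟩
      have harith : (h+1+1)*(2*b-1) = (h+1)*(2*b-1) + (2*b-1) := by ring
      rw [hFlen c] at hlen
      omega
    by_cases hsmall : ∃ c, (U c).ncard < d ^ h
    · -- recurse at y c
      obtain ⟨c, hc⟩ := hsmall
      obtain ⟨G', P₀', hP₀'dp, hP₀'head, hP₀'last, hP₀'int, hGsize, hP₀'len⟩ :=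
        ih D' hloop' (y c) (fun u hu => hdeg' c u hu) hc
      set G : TypeIIIGadget D b := ⟨G'.p, G'.q, G'.r, (G'.arc).1, G'.P₁, G'.P₂,
        dipath_mono hD'D G'.path₁, dipath_mono hD'D G'.path₂, G'.first₁, G'.first₂,
        G'.last₁, G'.last₂, G'.len₁, G'.len₂, G'.inter⟩ with hGdef
      have hGverts : G.verts = G'.verts := rfl
      have hGp : G.p = G'.p := rfl
      obtain ⟨hdp, hhead, hlast, hlen, _⟩ := hconcat c P₀' hP₀'dp hP₀'head
      have hvertsX : ∀ x ∈ G'.verts, x ∉ X := by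
        intro x hx
        rcases hx with hx | hx
        · exact chain'_all_prop (fun a b' hab => ⟨hab.2.1, hab.2.2⟩) G'.path₁.2.2
            (by have := G'.len₁; omega) x hx
        · exact chain'_all_prop (fun a b' hab => ⟨hab.2.1, hab.2.2⟩) G'.path₂.2.2
            (by have := G'.len₂; omega) x hx
      refine ⟨G, F c ++ P₀'.tail, hdp, hhead, by rw [hlast, hP₀'last], ?_, ?_, ?_⟩
      · intro x hx hxv
        rw [hGverts] at hxv
        rcases List.mem_append.mp hx with hxF | hxT
        · have hxX := hvertsX x hxv
          have hxndl : x ∉ (F c).dropLast := fun hcon => hxX (hdropX c x hcon)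
          have hsplit : (F c).dropLast ++ [y c] = F c := List.dropLast_append_getLast (hFne c)
          rw [← hsplit] at hxF
          rcases List.mem_append.mp hxF with hcon | hxy
          · exact absurd hcon hxndl
          · simp at hxy
            subst hxy
            exact hP₀'int (y c) (mem_of_head? hP₀'head) hxv
        · exact hP₀'int x (List.mem_of_mem_tail hxT) hxv
      · rw [hGverts]
        calc G'.verts.ncard ≤ (2*h+2)*(2*b-1) := hGsize
        _ ≤ (2*(h+1)+2)*(2*b-1) := Nat.mul_le_mul_right _ (by omega)
      · rw [hFlen c] at hlen
        have harith : (h+1)*(2*b-1) = h*(2*b-1) + (2*b-1) := by ring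
        omega
    · -- pigeonhole and surgery
      push_neg at hsmall
      have hex2 : ∃ (c c' : Fin d), c ≠ c' ∧ ∃ xs, xs ∈ U c ∧ xs ∈ U c' := by
        by_contra hno
        push_neg at hno
        have hdisjf : ∀ (c : Fin d), c ∈ Finset.univ → ∀ (c' : Fin d), c' ∈ Finset.univ →
            c ≠ c' → Disjoint ((U c).toFinset) ((U c').toFinset) := by
          intro c _ c' _ hcc
          rw [Finset.disjoint_left]
          intro a ha ha'
          rw [Set.mem_toFinset] at ha ha'
          exact hno c c' hcc a ha ha'
        have hcard := Finset.card_biUnion hdisjf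
        have hsum : (d:ℕ)^(h+1) ≤ ∑ c : Fin d, ((U c).toFinset).card := by
          have e1 : (d:ℕ)^(h+1) = d * d^h := by ring
          have e2 : ∑ _c : Fin d, (d:ℕ)^h = d * d^h := by
            rw [Finset.sum_const]
            simp [mul_comm]
          rw [e1, ← e2]
          apply Finset.sum_le_sum
          intro c _
          rw [← Set.ncard_eq_toFinset_card']
          exact hsmall c
        have hsubW : (Finset.univ.biUnion fun c => (U c).toFinset) ⊆ W.toFinset := by
          intro a ha
          rw [Finset.mem_biUnion] at ha
          obtain ⟨c, _, hac⟩ := ha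
          rw [Set.mem_toFinset] at hac ⊢
          exact hUW c hac
        have hWcard : W.toFinset.card < d^(h+1) := by
          rw [← Set.ncard_eq_toFinset_card']
          exact hdist
        have := Finset.card_le_card hsubW
        omega
      obtain ⟨c, c', hcc, xs, hxc, hxc'⟩ := hex2
      obtain ⟨Q, hQdp, hQhead, hQlast, hQlen⟩ := hxc
      obtain ⟨Q', hQ'dp, hQ'head, hQ'last, hQ'len⟩ := hxc'
      obtain ⟨hdpA, hheadA, hlastA, hlenA, heqA⟩ := hconcat c Q hQdp hQhead
      obtain ⟨hdpA', hheadA', hlastA', hlenA', heqA'⟩ := hconcat c' Q' hQ'dp hQ'head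
      have hQavoid : ∀ x ∈ Q, x ∉ X :=
        chain'_head_prop (fun a b' hab => hab.2.2) hQdp.2.2 hQhead (hyX c)
      have hQ'avoid : ∀ x ∈ Q', x ∉ X :=
        chain'_head_prop (fun a b' hab => hab.2.2) hQ'dp.2.2 hQ'head (hyX c')
      have hsur := surgery (D := D) b hb v xs ((F c).dropLast) ((F c').dropLast) Q Q'
        (by rw [heqA]; exact hdpA)
        (by rw [heqA']; exact hdpA')
        (by rw [List.length_dropLast, hFlen c]; omega)
        (by rw [List.length_dropLast, hFlen c']; omega)
        (by rw [head?_dropLast (by rw [hFlen c]; omega)]; exact hFhead c)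
        (by rw [head?_dropLast (by rw [hFlen c']; omega)]; exact hFhead c')
        hQdp.1 hQ'dp.1
        (by rw [List.getLast?_append_of_ne_nil _ hQdp.1]; exact hQlast)
        (by rw [List.getLast?_append_of_ne_nil _ hQ'dp.1]; exact hQ'last)
        (by
          intro x hx hx'
          exact hFpair c c' hcc x (List.dropLast_subset _ hx) (List.dropLast_subset _ hx'))
        (by
          intro x hx hcon
          exact hQavoid x hx (hdropX c' x hcon))
        (by
          intro x hx hcon
          exact hQ'avoid x hx (hdropX c x hcon))
        (by
          rw [hQhead, hQ'head]
          intro hcon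
          have hyy : y c = y c' := by simpa using hcon
          have : y c ∈ F c' := hyy ▸ hymem c'
          exact hyv c (hFpair c c' hcc (y c) (hymem c) this))
      obtain ⟨G, hGp, hGsize⟩ := hsur
      refine ⟨G, [v], ⟨by simp, by simp, List.isChain_singleton _⟩, by simp, by simp [hGp], ?_, ?_, ?_⟩
      · intro x hx hxv
        simp at hx
        rw [hGp, hx]
      · have hlq : ((F c).dropLast ++ Q).length = (2*b-1) + Q.length := by
          rw [List.length_append, List.length_dropLast, hFlen c]
          omega
        have hlq' : ((F c').dropLast ++ Q').length = (2*b-1) + Q'.length := by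
          rw [List.length_append, List.length_dropLast, hFlen c']
          omega
        have harith : (2*(h+1)+2)*(2*b-1) = (2*b-1) + (2*b-1) + ((h+1)*(2*b-1) + (h+1)*(2*b-1)) := by
          ring
        omega
      · simp
        have : 1*(2*b-1) ≤ (h+1)*(2*b-1) := Nat.mul_le_mul_right _ (by omega)
        omega

end MainAux

end Aux

/-- Suppose every vertex reachable from `v` in `D'` has out-degree at
least `(h+1)·(d(2b−2)+1) + d`, and fewer than `d^h` vertices of `D'` are at distance at
most `(h+1)(2b−1)` from `v`. Then `D'` contains a type-III gadget `G` together with a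
directed path `P₀` from `v` to `p(G)` meeting `G` only in `p(G)`, with
`|V(G)| ≤ (2h+2)(2b−1)` and `|V(P₀)| ≤ h(2b−1)`. -/
theorem stmt_14 {V : Type*} [Fintype V] (D : V → V → Prop) (hloop : ∀ v, ¬ D v v)
    (b h d : ℕ) (hb : 1 ≤ b) (hh : 1 ≤ h) (hd : 1 ≤ d) (v : V)
    (hdeg : ∀ u, Relation.ReflTransGen D v u →
      (h + 1) * (d * (2 * b - 2) + 1) + d ≤ outDeg D u)
    (hdist : ({u | ∃ P : List V, IsDipathList D P ∧ P.head? = some v ∧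
        P.getLast? = some u ∧ P.length ≤ (h + 1) * (2 * b - 1) + 1}).ncard < d ^ h) :
    ∃ (G : TypeIIIGadget D b) (P₀ : List V),
      IsDipathList D P₀ ∧ P₀.head? = some v ∧ P₀.getLast? = some G.p ∧
      (∀ x ∈ P₀, x ∈ G.verts → x = G.p) ∧
      G.verts.ncard ≤ (2 * h + 2) * (2 * b - 1) ∧
      P₀.length ≤ h * (2 * b - 1) := by
  exact aux b d hb hd h D hloop v hdeg hdist

end Paper
end

section
/- Let ℓ_1, ℓ_2 ∈ ℕ and let D be a digraph with minimum out-degree δ+(D) ≥ ℓ_1 + ℓ_2. Then for every vertex v ∈ V(D) there are directed paths P_1 and P_2 in D, of lengths ℓ_1 and ℓ_2 respectively, which both start at v and satisfy V(P_1) ∩ V(P_2) = {v}. -/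
namespace Paper

/-- Greedy extension: from any vertex outside a forbidden set `S`, if the minimum
out-degree is at least `S.card + n`, there is a directed path of `n` arcs starting
there and avoiding `S`. -/
lemma greedy_path {V : Type*} [Fintype V] (D : V → V → Prop) (hloop : ∀ v, ¬ D v v)
    (ℓ : ℕ) (hdeg : ∀ v, ℓ ≤ outDeg D v) :
    ∀ (n : ℕ) (S : Finset V) (u : V), u ∉ S → S.card + n ≤ ℓ →
    ∃ p : List V, IsDipathList D p ∧ p.head? = some u ∧ p.length = n + 1 ∧
      ∀ x ∈ p, x ∉ S := by
  classical
  intro n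
  induction n with
  | zero =>
    intro S u hu _
    exact ⟨[u], ⟨by simp, by simp, List.isChain_singleton u⟩, rfl, rfl, by simpa using hu⟩
  | succ n ih =>
    intro S u hu hcard
    -- find an out-neighbour of u outside insert u S
    have hN : ∃ w, D u w ∧ w ∉ insert u S := by
      by_contra h
      push_neg at h
      have hsub : {w | D u w}.toFinset ⊆ S := by
        intro w hw
        simp only [Set.mem_toFinset, Set.mem_setOf_eq] at hw
        rcases Finset.mem_insert.mp (h w hw) with h' | h'
        · exact absurd (h' ▸ hw) (hloop u)
        · exact h'
      have hle : {w | D u w}.toFinset.card ≤ S.card :=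
        Finset.card_le_card hsub
      have houtd : outDeg D u = {w | D u w}.toFinset.card := by
        simp [outDeg, Set.ncard_eq_toFinset_card']
      have h2 : outDeg D u ≤ S.card := by rw [houtd]; exact hle
      have := hdeg u
      omega
    obtain ⟨w, hw, hwnot⟩ := hN
    have hw' : w ∉ insert u S := hwnot
    obtain ⟨p, ⟨hne, hnd, hch⟩, hhead, hlen, havoid⟩ :=
      ih (insert u S) w hw' (by
        have : (insert u S).card = S.card + 1 := Finset.card_insert_of_notMem hu
        omega)
    refine ⟨u :: p, ⟨by simp, ?_, ?_⟩, rfl, by simp [hlen], ?_⟩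
    · refine List.nodup_cons.mpr ⟨fun hup => ?_, hnd⟩
      exact havoid u hup (Finset.mem_insert_self u S)
    · cases p with
      | nil => exact List.isChain_singleton u
      | cons a t =>
        have : a = w := by simpa using hhead
        subst this
        exact List.isChain_cons_cons.mpr ⟨hw, hch⟩
    · intro x hx
      rcases List.mem_cons.mp hx with h | h
      · subst h; exact hu
      · intro hxS
        exact havoid x h (Finset.mem_insert_of_mem hxS)

/-- If `δ⁺(D) ≥ ℓ₁ + ℓ₂`, then from every vertex `v` there are two
directed paths of lengths `ℓ₁` and `ℓ₂` starting at `v` and sharing only `v`. -/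
theorem stmt_15 {V : Type*} [Fintype V] (D : V → V → Prop) (hloop : ∀ v, ¬ D v v)
    (ℓ₁ ℓ₂ : ℕ) (hdeg : ∀ v, ℓ₁ + ℓ₂ ≤ outDeg D v) (v : V) :
    ∃ P₁ P₂ : List V,
      IsDipathList D P₁ ∧ IsDipathList D P₂ ∧
      P₁.head? = some v ∧ P₂.head? = some v ∧
      P₁.length = ℓ₁ + 1 ∧ P₂.length = ℓ₂ + 1 ∧
      (∀ x ∈ P₁, x ∈ P₂ → x = v) := by
  classical
  obtain ⟨P₁, hP₁, hh₁, hl₁, _⟩ :=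
    greedy_path D hloop (ℓ₁ + ℓ₂) hdeg ℓ₁ ∅ v (by simp) (by simp)
  have hvP₁ : v ∈ P₁ := by
    cases P₁ with
    | nil => simp at hh₁
    | cons a t => simp_all
  have hcardS : (P₁.toFinset.erase v).card = ℓ₁ := by
    have : P₁.toFinset.card = ℓ₁ + 1 := by
      rw [List.toFinset_card_of_nodup hP₁.2.1, hl₁]
    rw [Finset.card_erase_of_mem (List.mem_toFinset.mpr hvP₁), this]
    omega
  obtain ⟨P₂, hP₂, hh₂, hl₂, havoid⟩ :=
    greedy_path D hloop (ℓ₁ + ℓ₂) hdeg ℓ₂ (P₁.toFinset.erase v) v (by simp) (by omega)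
  refine ⟨P₁, P₂, hP₁, hP₂, hh₁, hh₂, hl₁, hl₂, ?_⟩
  intro x hx₁ hx₂
  by_contra hxv
  exact havoid x hx₂ (Finset.mem_erase.mpr ⟨hxv, List.mem_toFinset.mpr hx₁⟩)

end Paper
end
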